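/- TC-Approval is Pareto optimal: for every finite candidate set C, every election E on C, and all candidates a, b ∈ C such that a ≻ b in every vote of E, if a is not a TC-Approval winner of E, then b is not a TC-Approval winner of E. -/

import Mathlib

open scoped Classical

/-- A tournament on `C`: an irreflexive relation such that for all distinct
`a b` exactly one of `r a b`, `r b a` holds. -/
def IsTournament {C : Type*} (r : C → C → Prop) : Prop :=
  (∀ a : C, ¬ r a a) ∧ ∀ a b : C, a ≠ b → (r a b ↔ ¬ r b a)

/-- The `S`-Approval score of candidate `c` in election `E`: the number of
votes `T` of `E` with `c ∈ S T`. -/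
noncomputable def approvalScore {C : Type*} (S : (C → C → Prop) → Set C)
    (E : List (C → C → Prop)) (c : C) : ℕ :=
  (E.map (fun r => if c ∈ S r then 1 else 0)).sum

/-- The `S`-Approval winner set of election `E`: candidates of maximum score. -/
def winners {C : Type*} (S : (C → C → Prop) → Set C)
    (E : List (C → C → Prop)) : Set C :=
  {c | ∀ d : C, approvalScore S E d ≤ approvalScore S E c}

/-- The top cycle of a tournament: candidates from which every candidate is
reachable by a directed path. -/
def topCycle {C : Type*} (r : C → C → Prop) : Set C :=
  {a | ∀ b : C, Relation.ReflTransGen r a b}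

private lemma score_le {C : Type*} (E : List (C → C → Prop)) (a b : C)
    (hab : ∀ r ∈ E, r a b) :
    approvalScore topCycle E b ≤ approvalScore topCycle E a := by
  induction E with
  | nil => simp [approvalScore]
  | cons r E ih =>
    have hr : r a b := hab r List.mem_cons_self
    have hstep : (if b ∈ topCycle r then 1 else 0) ≤
        (if a ∈ topCycle r then 1 else 0) := by
      by_cases h : b ∈ topCycle r
      · have : a ∈ topCycle r := fun c => Relation.ReflTransGen.head hr (h c)
        simp [h, this]
      · simp [h]
    have htail := ih (fun s hs => hab s (List.mem_cons_of_mem _ hs))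
    simpa [approvalScore] using Nat.add_le_add hstep htail

/-- TC-Approval is Pareto optimal. -/
theorem stmt_11 {C : Type*} [Finite C] (E : List (C → C → Prop))
    (hE : ∀ r ∈ E, IsTournament r) (a b : C)
    (hab : ∀ r ∈ E, r a b)
    (ha : a ∉ winners topCycle E) :
    b ∉ winners topCycle E := by
  intro hb
  exact ha fun d => le_trans (hb d) (score_le E a b hab)
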